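/- For any pair of nondegenerate hierarchies 𝒜, ℬ over a finite set S, the crossing dissimilarity is bounded linearly below and quadratically above by the Robinson–Foulds distance: d_RF(𝒜,ℬ) ≤ d_CM(𝒜,ℬ) ≤ d_RF(𝒜,ℬ)². -/

import Mathlib

open scoped Classical

namespace TreeDist

variable {α : Type*} [DecidableEq α]

/-- Two finite sets are compatible if they are disjoint or nested. -/
def Compatible (A B : Finset α) : Prop :=
  A ∩ B = ∅ ∨ A ⊆ B ∨ B ⊆ A

/-- A hierarchy over `S`: a laminar family of nonempty subsets of `S`
containing `S` and all singletons. -/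
def IsHierarchy (S : Finset α) (F : Finset (Finset α)) : Prop :=
  (∀ A ∈ F, A ⊆ S ∧ A.Nonempty) ∧
  (∀ A ∈ F, ∀ B ∈ F, Compatible A B) ∧
  S ∈ F ∧ ∀ i ∈ S, ({i} : Finset α) ∈ F

/-- A nondegenerate (binary) hierarchy: a hierarchy with `2|S| - 1` clusters,
equivalently a maximal laminar family. -/
def Nondeg (S : Finset α) (F : Finset (Finset α)) : Prop :=
  IsHierarchy S F ∧ F.card = 2 * S.card - 1

/-- `P` is the parent of `I` in the family `F`: the smallest cluster of `F`
strictly containing `I`. -/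
def IsParent (F : Finset (Finset α)) (I P : Finset α) : Prop :=
  P ∈ F ∧ I ⊂ P ∧ ∀ Q ∈ F, I ⊂ Q → P ⊆ Q

/-- `G` is the result of an NNI move on `F` at some grandchild `C`:
`G = (F \ {parent C}) ∪ {grandparent C \ C}`. -/
def IsNNIMove (F G : Finset (Finset α)) : Prop :=
  ∃ C P GP, C ∈ F ∧ IsParent F C P ∧ IsParent F P GP ∧
    G = insert (GP \ C) (F.erase P)

/-- Restriction of a family of sets to `K`: `{A ∩ K : A ∈ F, A ∩ K ≠ ∅}`. -/
noncomputable def restrictFam (F : Finset (Finset α)) (K : Finset α) : Finset (Finset α) :=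
  (F.image (· ∩ K)).filter fun A => A.Nonempty

/-- The cardinality of the smallest common ancestor of `i` and `j` in `F`, i.e. the
minimum cardinality of a cluster of `F` containing both `i` and `j`. -/
noncomputable def caCard (F : Finset (Finset α)) (i j : α) : ℕ :=
  sInf {n | ∃ A ∈ F, i ∈ A ∧ j ∈ A ∧ A.card = n}

/-- Ultrametric representation `U(F)_{ij} = |ca(i,j)| - 1`. -/
noncomputable def Umat (F : Finset (Finset α)) (i j : α) : ℤ :=
  (caCard F i j : ℤ) - 1

/-- Cluster-cardinality distance `d_CC = (1/2) Σ_{i,j ∈ S} |U(F)_{ij} - U(G)_{ij}|`. -/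
noncomputable def dCC (S : Finset α) (F G : Finset (Finset α)) : ℚ :=
  (1 / 2) * ∑ i ∈ S, ∑ j ∈ S, |((Umat F i j : ℚ)) - ((Umat G i j : ℚ))|

/-- Robinson–Foulds distance: half the size of the symmetric difference of cluster sets. -/
noncomputable def dRF (F G : Finset (Finset α)) : ℚ :=
  (((F \ G) ∪ (G \ F)).card : ℚ) / 2

/-- Crossing dissimilarity: the number of incompatible pairs of clusters. -/
noncomputable def dCM (F G : Finset (Finset α)) : ℕ :=
  ((F ×ˢ G).filter fun p => ¬ Compatible p.1 p.2).card

/-- Depth of a cluster: the number of its strict ancestors in `F`. -/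
noncomputable def depth (F : Finset (Finset α)) (I : Finset α) : ℕ :=
  (F.filter fun J => I ⊂ J).card

/-- The children of `I` in `F`: the clusters of `F` whose parent is `I`. -/
noncomputable def children (F : Finset (Finset α)) (I : Finset α) : Finset (Finset α) :=
  F.filter fun C => IsParent F C I

/-- `η_{F,G}(I,J)`: the number of members of `(children I)|_J` incompatible with
the family `(children J)|_I`. -/
noncomputable def eta (F G : Finset (Finset α)) (I J : Finset α) : ℕ :=
  ((restrictFam (children F I) J).filter
    fun A => ∃ B ∈ restrictFam (children G J) I, ¬ Compatible A B).card

/-- `θ(x) = (x² + x)/2`. -/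
def theta (x : ℕ) : ℚ := ((x : ℚ) ^ 2 + x) / 2

/-- Closed-form NNI navigation distance `d_Nav(F,G) = Σ_{I∈F, J∈G} θ(η_{F,G}(I,J))`. -/
noncomputable def dNav (F G : Finset (Finset α)) : ℚ :=
  ∑ I ∈ F, ∑ J ∈ G, theta (eta F G I J)


lemma compatible_symm {A B : Finset α} (h : Compatible A B) : Compatible B A := by
  rcases h with h | h | h
  · left; rwa [Finset.inter_comm]
  · right; right; exact h
  · right; left; exact h

/-- A laminar family of nonempty subsets of `S` has at most `2|S| - 1` members. -/
lemma laminar_card_le :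
    ∀ n (S : Finset α) (L : Finset (Finset α)), S.card ≤ n →
      (∀ A ∈ L, A ⊆ S ∧ A.Nonempty) →
      (∀ A ∈ L, ∀ B ∈ L, Compatible A B) →
      L.card ≤ 2 * S.card - 1 := by
  intro n
  induction n with
  | zero =>
      intro S L hS hsub _
      have hL : L = ∅ := by
        rw [Finset.eq_empty_iff_forall_notMem]
        intro A hA
        obtain ⟨h1, h2⟩ := hsub A hA
        have hS0 : S = ∅ := Finset.card_eq_zero.mp (Nat.le_zero.mp hS)
        rw [hS0] at h1
        exact h2.ne_empty (Finset.subset_empty.mp h1)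
      simp [hL]
  | succ n ih =>
      intro S L hS hsub hlam
      rcases L.eq_empty_or_nonempty with rfl | ⟨A0, hA0⟩
      · simp
      have hSne : S.Nonempty := ((hsub A0 hA0).2).mono (hsub A0 hA0).1
      have hS1 : 1 ≤ S.card := Finset.card_pos.mpr hSne
      set L' := L.erase S with hL'
      set M := L'.filter (fun A => ∀ B ∈ L', A ⊆ B → A = B) with hM
      have hmemL' : ∀ A ∈ L', A ∈ L := fun A hA => Finset.mem_of_mem_erase hA
      -- every element of L' is below some maximal element
      have hmaxex : ∀ B ∈ L', ∃ A ∈ M, B ⊆ A := by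
        intro B hB
        set T := L'.filter (fun A => B ⊆ A) with hT
        have hTne : T.Nonempty := ⟨B, Finset.mem_filter.mpr ⟨hB, subset_rfl⟩⟩
        obtain ⟨A, hAT, hAmax⟩ := T.exists_maximal hTne
        obtain ⟨hAL', hBA⟩ := Finset.mem_filter.mp hAT
        refine ⟨A, Finset.mem_filter.mpr ⟨hAL', ?_⟩, hBA⟩
        intro C hC hAC
        by_contra hne
        exact hne (le_antisymm hAC (hAmax (Finset.mem_filter.mpr ⟨hC, hBA.trans hAC⟩) hAC))
      -- members of M are pairwise disjoint
      have hdisj : ∀ A ∈ M, ∀ B ∈ M, A ≠ B → Disjoint A B := by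
        intro A hA B hB hne
        obtain ⟨hAL', hAmax⟩ := Finset.mem_filter.mp hA
        obtain ⟨hBL', hBmax⟩ := Finset.mem_filter.mp hB
        rcases hlam A (hmemL' A hAL') B (hmemL' B hBL') with h | h | h
        · exact Finset.disjoint_iff_inter_eq_empty.mpr h
        · exact absurd (hAmax B hBL' h) hne
        · exact absurd (hBmax A hAL' h).symm hne
      -- each A ∈ M is a strict subset of S
      have hAltS : ∀ A ∈ M, A.card < S.card := by
        intro A hA
        obtain ⟨hAL', _⟩ := Finset.mem_filter.mp hA
        have hAS : A ⊆ S := (hsub A (hmemL' A hAL')).1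
        have hAneS : A ≠ S := Finset.ne_of_mem_erase hAL'
        exact Finset.card_lt_card (lt_of_le_of_ne hAS hAneS)
      -- the restricted families
      have hsub2 : ∀ A ∈ M, (L'.filter (· ⊆ A)).card + 1 ≤ 2 * A.card := by
        intro A hA
        obtain ⟨hAL', _⟩ := Finset.mem_filter.mp hA
        have hAne : A.Nonempty := (hsub A (hmemL' A hAL')).2
        have h1 : 1 ≤ A.card := Finset.card_pos.mpr hAne
        have hAn : A.card ≤ n := by have := hAltS A hA; omega
        have := ih A (L'.filter (· ⊆ A)) hAn
          (fun B hB => ⟨(Finset.mem_filter.mp hB).2, (hsub B (hmemL' B (Finset.mem_filter.mp hB).1)).2⟩)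
          (fun B hB C hC => hlam B (hmemL' B (Finset.mem_filter.mp hB).1)
            C (hmemL' C (Finset.mem_filter.mp hC).1))
        omega
      -- sum of cardinalities of M is at most |S|
      have hsumM : ∑ A ∈ M, A.card ≤ S.card := by
        have h1 : (M.biUnion fun A => A).card = ∑ A ∈ M, A.card := by
          rw [Finset.card_biUnion hdisj]
        have h2 : (M.biUnion fun A => A) ⊆ S := by
          intro x hx
          obtain ⟨A, hA, hxA⟩ := Finset.mem_biUnion.mp hx
          exact (hsub A (hmemL' A (Finset.mem_filter.mp hA).1)).1 hxA
        calc ∑ A ∈ M, A.card = (M.biUnion fun A => A).card := h1.symm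
          _ ≤ S.card := Finset.card_le_card h2
      -- cover L'
      have hcover : L'.card ≤ ∑ A ∈ M, (L'.filter (· ⊆ A)).card := by
        have hsubB : L' ⊆ M.biUnion (fun A => L'.filter (· ⊆ A)) := by
          intro B hB
          obtain ⟨A, hA, hBA⟩ := hmaxex B hB
          exact Finset.mem_biUnion.mpr ⟨A, hA, Finset.mem_filter.mpr ⟨hB, hBA⟩⟩
        exact le_trans (Finset.card_le_card hsubB) Finset.card_biUnion_le
      have hLL' : L.card ≤ L'.card + 1 := by
        have : L ⊆ insert S L' := by
          intro A hA
          rcases eq_or_ne A S with rfl | hne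
          · exact Finset.mem_insert_self _ _
          · exact Finset.mem_insert_of_mem (Finset.mem_erase.mpr ⟨hne, hA⟩)
        calc L.card ≤ (insert S L').card := Finset.card_le_card this
          _ ≤ L'.card + 1 := Finset.card_insert_le _ _
      -- key inequality
      have hkey : (∑ A ∈ M, (L'.filter (· ⊆ A)).card) + M.card ≤ 2 * S.card := by
        calc (∑ A ∈ M, (L'.filter (· ⊆ A)).card) + M.card
            = ∑ A ∈ M, ((L'.filter (· ⊆ A)).card + 1) := by
              rw [Finset.sum_add_distrib, Finset.sum_const, smul_eq_mul, mul_one]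
          _ ≤ ∑ A ∈ M, 2 * A.card := Finset.sum_le_sum hsub2
          _ = 2 * ∑ A ∈ M, A.card := by rw [Finset.mul_sum]
          _ ≤ 2 * S.card := by omega
      rcases Nat.lt_or_ge M.card 2 with hMc | hMc
      · interval_cases h : M.card
        · -- M empty : L' empty
          have hM0 : M = ∅ := Finset.card_eq_zero.mp h
          have hL'0 : L' = ∅ := by
            rw [Finset.eq_empty_iff_forall_notMem]
            intro B hB
            obtain ⟨A, hA, _⟩ := hmaxex B hB
            rw [hM0] at hA
            exact absurd hA (Finset.notMem_empty A)
          have : L'.card = 0 := by rw [hL'0]; rfl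
          omega
        · -- M = {A}
          obtain ⟨A, hAeq⟩ := Finset.card_eq_one.mp h
          have hAM : A ∈ M := by rw [hAeq]; exact Finset.mem_singleton_self A
          have hAlt := hAltS A hAM
          have h2 := hsub2 A hAM
          have h3 : L'.card ≤ (L'.filter (· ⊆ A)).card := by
            have := hcover
            rw [hAeq, Finset.sum_singleton] at this
            exact this
          omega
      · omega

lemma exists_incompatible {S : Finset α} {G : Finset (Finset α)} (hG : Nondeg S G)
    {I : Finset α} (hIS : I ⊆ S) (hIne : I.Nonempty) (hIG : I ∉ G) :
    ∃ J ∈ G, ¬ Compatible I J := by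
  by_contra h
  push_neg at h
  have hSne : S.Nonempty := (hG.1.1 S hG.1.2.2.1).2
  have hS1 : 1 ≤ S.card := Finset.card_pos.mpr hSne
  have hbound := laminar_card_le S.card S (insert I G) le_rfl
    (by
      intro A hA
      rcases Finset.mem_insert.mp hA with rfl | hA
      · exact ⟨hIS, hIne⟩
      · exact hG.1.1 A hA)
    (by
      intro A hA B hB
      rcases Finset.mem_insert.mp hA with rfl | hA2
      · rcases Finset.mem_insert.mp hB with rfl | hB2
        · exact Or.inr (Or.inl subset_rfl)
        · exact h B hB2
      · rcases Finset.mem_insert.mp hB with rfl | hB2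
        · exact compatible_symm (h A hA2)
        · exact hG.1.2.1 A hA2 B hB2)
  have hcard : (insert I G).card = G.card + 1 := Finset.card_insert_of_notMem hIG
  have := hG.2
  omega

theorem dRF_le_dCM_le_dRF_sq (S : Finset α) (F G : Finset (Finset α))
    (hF : Nondeg S F) (hG : Nondeg S G) :
    dRF F G ≤ (dCM F G : ℚ) ∧ (dCM F G : ℚ) ≤ (dRF F G) ^ 2 := by
  set X := F \ G with hX
  set Y := G \ F with hY
  set C := (F ×ˢ G).filter (fun p => ¬ Compatible p.1 p.2) with hC
  have hcardXY : X.card = Y.card :=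
    Finset.card_sdiff_comm (by rw [hF.2, hG.2])
  have hdisjXY : Disjoint X Y := by
    refine Finset.disjoint_left.mpr ?_
    intro A hA hA'
    exact (Finset.mem_sdiff.mp hA).2 (Finset.mem_sdiff.mp hA').1
  have hdRF : dRF F G = (X.card : ℚ) := by
    rw [dRF, Finset.card_union_of_disjoint hdisjXY, ← hcardXY]
    push_cast
    ring
  -- crossing pairs live in X ×ˢ Y
  have hCsub : C ⊆ X ×ˢ Y := by
    intro p hp
    obtain ⟨hpFG, hpc⟩ := Finset.mem_filter.mp hp
    obtain ⟨hpF, hpG⟩ := Finset.mem_product.mp hpFG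
    refine Finset.mem_product.mpr ⟨Finset.mem_sdiff.mpr ⟨hpF, ?_⟩,
      Finset.mem_sdiff.mpr ⟨hpG, ?_⟩⟩
    · intro h1
      exact hpc (hG.1.2.1 p.1 h1 p.2 hpG)
    · intro h2
      exact hpc (hF.1.2.1 p.1 hpF p.2 h2)
  -- upper bound
  have hupper : C.card ≤ X.card * Y.card := by
    calc C.card ≤ (X ×ˢ Y).card := Finset.card_le_card hCsub
      _ = X.card * Y.card := Finset.card_product X Y
  -- lower bound: injection from X into C
  have hlower : X.card ≤ C.card := by
    classical
    refine Finset.card_le_card_of_injOn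
      (fun I => (I, if h : ∃ J ∈ G, ¬ Compatible I J then h.choose else ∅)) ?_ ?_
    · intro I hI
      obtain ⟨hIF, hIG⟩ := Finset.mem_sdiff.mp hI
      have hex : ∃ J ∈ G, ¬ Compatible I J :=
        exists_incompatible hG (hF.1.1 I hIF).1 (hF.1.1 I hIF).2 hIG
      obtain ⟨hJG, hJc⟩ := hex.choose_spec
      simp only [dif_pos hex]
      exact Finset.mem_filter.mpr ⟨Finset.mem_product.mpr ⟨hIF, hJG⟩, hJc⟩
    · intro I _ I' _ h
      exact congrArg Prod.fst h
  constructor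
  · rw [hdRF, dCM, ← hC]
    exact_mod_cast hlower
  · rw [hdRF, dCM, ← hC, ← hcardXY] at *
    have : C.card ≤ X.card * X.card := by rw [hcardXY]; exact hupper
    calc (C.card : ℚ) ≤ (X.card : ℚ) * X.card := by exact_mod_cast this
      _ = (X.card : ℚ) ^ 2 := (sq (X.card:ℚ)).symm


end TreeDist
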